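/- Antitonicity of the set of safe inputs: for nonempty finite sets of states S₁ ⊆ S₂ with S₂ online determinable, every input that is safe for S₂ is also safe for S₁, i.e., ψ(S₂) ⊆ ψ(S₁). -/
import Mathlib


variable {I S O : Type} [Fintype I] [Fintype S] [Fintype O]
  [DecidableEq I] [DecidableEq S] [DecidableEq O]

/-- Output sequence generated from state `s` by input word `w`. -/
def Hout (sig : I → S → S) (rho : S → O) : S → List I → List O
  | s, [] => [rho s]
  | s, i :: w => rho s :: Hout sig rho (sig i s) w

/-- Derivation function: successors of `T` under input `i` producing output `o`. -/
def zeta (sig : I → S → S) (rho : S → O) (T : Finset S) (i : I) (o : O) : Finset S :=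
  (T.image (sig i)).filter (fun s' => rho s' = o)

/-- Online determinability of a finite set of states. -/
inductive Det (sig : I → S → S) (rho : S → O) : Finset S → Prop
  | single (T : Finset S) (h : T.card = 1) : Det sig rho T
  | step (T : Finset S) (i : I) (hinj : (T.image (sig i)).card = T.card)
      (h : ∀ o : O, (zeta sig rho T i o).Nonempty → Det sig rho (zeta sig rho T i o)) :
      Det sig rho T

/-- Safe inputs for a set of states. -/
def psi (sig : I → S → S) (rho : S → O) (T : Finset S) : Set I :=
  {i | (T.image (sig i)).card = T.card ∧
    ∀ o : O, (zeta sig rho T i o).Nonempty → Det sig rho (zeta sig rho T i o)}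

lemma zeta_mono (sig : I → S → S) (rho : S → O) {T1 T2 : Finset S} (h : T1 ⊆ T2)
    (i : I) (o : O) : zeta sig rho T1 i o ⊆ zeta sig rho T2 i o :=
  Finset.filter_subset_filter _ (Finset.image_subset_image h)

lemma image_card_sub (sig : I → S → S) {T1 T2 : Finset S} (h : T1 ⊆ T2) (i : I)
    (hinj : (T2.image (sig i)).card = T2.card) :
    (T1.image (sig i)).card = T1.card := by
  have h2 : Set.InjOn (sig i) T2 := Finset.card_image_iff.mp hinj
  exact Finset.card_image_iff.mpr (h2.mono (by exact_mod_cast h))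

lemma det_mono (sig : I → S → S) (rho : S → O) {T2 : Finset S} (hdet : Det sig rho T2) :
    ∀ T1 : Finset S, T1 ⊆ T2 → T1.Nonempty → Det sig rho T1 := by
  induction hdet with
  | single T h =>
    intro T1 hsub hne
    obtain ⟨a, ha⟩ := Finset.card_eq_one.mp h
    subst ha
    have : T1 = {a} := Finset.eq_of_subset_of_card_le hsub
      (by simpa using Finset.card_pos.mpr hne)
    exact Det.single T1 (by simp [this])
  | step T i hinj h ih =>
    intro T1 hsub hne
    refine Det.step T1 i (image_card_sub sig hsub i hinj) (fun o hno => ?_)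
    have hsub' := zeta_mono sig rho hsub i o
    exact ih o (hno.mono hsub') _ hsub' hno

theorem psi_antitone (sig : I → S → S) (rho : S → O) (T1 T2 : Finset S)
    (hsub : T1 ⊆ T2) (hne : T1.Nonempty) (hdet : Det sig rho T2) :
    psi sig rho T2 ⊆ psi sig rho T1 := by
  rintro i ⟨hinj, hdo⟩
  refine ⟨image_card_sub sig hsub i hinj, fun o hno => ?_⟩
  have hsub' := zeta_mono sig rho hsub i o
  exact det_mono sig rho (hdo o (hno.mono hsub')) _ hsub' hno
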